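/- Let σ and θ be substitutions and α a prenaming safe for both σ and θ (vars(σ) ∪ vars(θ) contained in the injectivity domain of α). Then α(σ ∘ θ) = α(σ) ∘ α(θ), where α(·) denotes the substitution variant operation. -/

import Mathlib

inductive Tm : Type
  | var : ℕ → Tm
  | fn : ℕ → List Tm → Tm

namespace Tm

def map (σ : ℕ → ℕ) : Tm → Tm
  | var x => var (σ x)
  | fn f ts => fn f (ts.attach.map fun t => t.1.map σ)
decreasing_by simp_wf; have := List.sizeOf_lt_of_mem t.2; omega

def subst (σ : ℕ → Tm) : Tm → Tm
  | var x => σ x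
  | fn f ts => fn f (ts.attach.map fun t => t.1.subst σ)
decreasing_by simp_wf; have := List.sizeOf_lt_of_mem t.2; omega

def vars : Tm → Finset ℕ
  | var x => {x}
  | fn _ ts => (ts.attach.map fun t => t.1.vars).foldr (· ∪ ·) ∅
decreasing_by simp_wf; have := List.sizeOf_lt_of_mem t.2; omega

end Tm

/-- The active domain of a substitution. -/
def SDom (σ : ℕ → Tm) : Set ℕ := {x | σ x ≠ Tm.var x}

/-- The set of variables of a substitution: Dom(σ) ∪ vars(σ(Dom σ)). -/
def varsS (σ : ℕ → Tm) : Set ℕ := SDom σ ∪ ⋃ x ∈ SDom σ, ↑(σ x).vars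

open Classical

/-- The substitution variant α(σ) with bindings α(x)/α(σ(x)) for x ∈ Dom σ. -/
noncomputable def variant (α : ℕ → ℕ) (σ : ℕ → Tm) : ℕ → Tm :=
  fun y => if h : ∃ x, σ x ≠ Tm.var x ∧ α x = y then (σ h.choose).map α else Tm.var y

/-- Composition of substitutions: (σ ∘ θ)(x) = σ(θ(x)). -/
def scomp (σ θ : ℕ → Tm) : ℕ → Tm := fun x => (θ x).subst σ



lemma mem_foldr_union {x : ℕ} : ∀ (l : List (Finset ℕ)),
    x ∈ l.foldr (· ∪ ·) ∅ ↔ ∃ s ∈ l, x ∈ s := by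
  intro l; induction l with
  | nil => simp
  | cons h t ih => simp [ih]

lemma mem_vars_fn {x : ℕ} {f : ℕ} {ts : List Tm} :
    x ∈ (Tm.fn f ts).vars ↔ ∃ t ∈ ts, x ∈ t.vars := by
  rw [Tm.vars]
  rw [mem_foldr_union]
  constructor
  · rintro ⟨s, hs, hx⟩
    simp only [List.mem_map, List.mem_attach, true_and, Subtype.exists] at hs
    obtain ⟨t, ht, rfl⟩ := hs
    exact ⟨t, ht, hx⟩
  · rintro ⟨t, ht, hx⟩
    exact ⟨t.vars, by simp [List.mem_map]; exact ⟨t, ht, rfl⟩, hx⟩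

lemma map_subst_comm (α : ℕ → ℕ) (σ V : ℕ → Tm) (S : Set ℕ)
    (key : ∀ z ∈ S, V (α z) = (σ z).map α) :
    ∀ t : Tm, (∀ z ∈ t.vars, z ∈ S) → (t.map α).subst V = (t.subst σ).map α := by
  intro t
  induction t using Tm.map.induct with
  | case1 x =>
    intro h
    rw [Tm.map, Tm.subst, Tm.subst, key x (h x (by rw [Tm.vars]; simp))]
  | case2 f ts ih =>
    intro h
    rw [Tm.map, Tm.subst, Tm.subst, Tm.map]
    simp only [List.attach_map_val, List.map_map]
    congr 1
    apply List.map_congr_left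
    intro t ht
    exact ih ⟨t, ht⟩ (fun z hz => h z (mem_vars_fn.2 ⟨t, ht, hz⟩))

theorem stmt18 (σ θ : ℕ → Tm) (hσfin : (SDom σ).Finite) (hθfin : (SDom θ).Finite)
    (α : ℕ → ℕ) (C : Finset ℕ)
    (hdom : ∀ x, α x ≠ x → x ∈ C) (hinj : Set.InjOn α ↑C)
    (hsafe : varsS σ ∪ varsS θ ⊆ ((C.image α \ C : Finset ℕ) : Set ℕ)ᶜ) :
    ∀ x : ℕ, variant α (scomp σ θ) x = (variant α θ x).subst (variant α σ) := by
  set T : Set ℕ := ((C.image α \ C : Finset ℕ) : Set ℕ)ᶜ with hT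
  have hfix : ∀ a, a ∉ C → α a = a := fun a ha => by
    by_contra hc; exact ha (hdom a hc)
  have hinjT : ∀ a b, a ∈ T → b ∈ T → α a = α b → a = b := by
    intro a b ha hb hab
    by_cases hac : a ∈ C <;> by_cases hbc : b ∈ C
    · exact hinj hac hbc hab
    · exfalso
      rw [hfix b hbc] at hab
      exact hb (by simp only [Finset.coe_sdiff, Set.mem_diff, Finset.mem_coe,
        Finset.mem_image]; exact ⟨⟨a, hac, hab⟩, hbc⟩)
    · exfalso
      rw [hfix a hac] at hab
      exact ha (by simp only [Finset.coe_sdiff, Set.mem_diff, Finset.mem_coe,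
        Finset.mem_image]; exact ⟨⟨b, hbc, hab.symm⟩, hac⟩)
    · rw [← hfix a hac, ← hfix b hbc, hab]
  have hσT : varsS σ ⊆ T := fun x hx => hsafe (Or.inl hx)
  have hθT : varsS θ ⊆ T := fun x hx => hsafe (Or.inr hx)
  have sdomσ : ∀ x, σ x ≠ Tm.var x → x ∈ T := fun x hx => hσT (Or.inl hx)
  have sdomθ : ∀ x, θ x ≠ Tm.var x → x ∈ T := fun x hx => hθT (Or.inl hx)
  have varsσ : ∀ x, σ x ≠ Tm.var x → ∀ z ∈ (σ x).vars, z ∈ T := fun x hx z hz =>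
    hσT (Or.inr (Set.mem_biUnion hx hz))
  have varsθ : ∀ x, θ x ≠ Tm.var x → ∀ z ∈ (θ x).vars, z ∈ T := fun x hx z hz =>
    hθT (Or.inr (Set.mem_biUnion hx hz))
  have key : ∀ (τ : ℕ → Tm), (∀ x, τ x ≠ Tm.var x → x ∈ T) →
      ∀ z ∈ T, variant α τ (α z) = (τ z).map α := by
    intro τ hτ z hz
    by_cases h : ∃ x, τ x ≠ Tm.var x ∧ α x = α z
    · have hx := h.choose_spec
      have heq : h.choose = z := hinjT _ _ (hτ _ hx.1) hz hx.2
      simp only [variant, dif_pos h, heq]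
    · have hz' : τ z = Tm.var z := by
        by_contra hc; exact h ⟨z, hc, rfl⟩
      simp only [variant, dif_neg h, hz', Tm.map]
  have keyσ : ∀ z ∈ T, variant α σ (α z) = (σ z).map α := key σ sdomσ
  have keyθ : ∀ z ∈ T, variant α θ (α z) = (θ z).map α := key θ sdomθ
  have msc := map_subst_comm α σ (variant α σ) T keyσ
  have sdomsc : ∀ x, scomp σ θ x ≠ Tm.var x → x ∈ T := by
    intro x hx
    by_cases hθ0 : θ x = Tm.var x
    · refine sdomσ x ?_
      have : scomp σ θ x = σ x := by rw [scomp, hθ0, Tm.subst]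
      rw [← this]; exact hx
    · exact sdomθ x hθ0
  intro y
  by_cases h1 : ∃ x, scomp σ θ x ≠ Tm.var x ∧ α x = y
  · obtain ⟨x0, hne, rfl⟩ := h1
    have hx0T : x0 ∈ T := sdomsc x0 hne
    have hvθ : ∀ z ∈ (θ x0).vars, z ∈ T := by
      by_cases hθ0 : θ x0 = Tm.var x0
      · intro z hz
        rw [hθ0, Tm.vars, Finset.mem_singleton] at hz
        rw [hz]; exact hx0T
      · exact varsθ x0 hθ0
    rw [key (scomp σ θ) sdomsc x0 hx0T, keyθ x0 hx0T, msc (θ x0) hvθ]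
    rfl
  · simp only [variant, dif_neg h1]
    by_cases h2 : ∃ x, θ x ≠ Tm.var x ∧ α x = y
    · have hx1 := h2.choose_spec
      set x1 := h2.choose with hx1def
      have hx1T : x1 ∈ T := sdomθ x1 hx1.1
      simp only [dif_pos h2, ← hx1def]
      rw [msc (θ x1) (varsθ x1 hx1.1)]
      have hsc : (θ x1).subst σ = Tm.var x1 := by
        by_contra hc
        exact h1 ⟨x1, hc, hx1.2⟩
      rw [hsc, Tm.map, hx1.2]
    · simp only [dif_neg h2, Tm.subst]
      have h3 : ¬ ∃ x, σ x ≠ Tm.var x ∧ α x = y := by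
        rintro ⟨x2, hne, hax⟩
        have hθ2 : θ x2 = Tm.var x2 := by
          by_contra hc; exact h2 ⟨x2, hc, hax⟩
        refine h1 ⟨x2, ?_, hax⟩
        rw [scomp, hθ2, Tm.subst]; exact hne
      simp only [variant, dif_neg h3]
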